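/- For every λ > 0, the quadratic function φ(u) = a u² + b u + c, where a = (e^λ − e^{−λσ²} − λ(1+σ²)e^{−λσ²})/(1+σ²)², b = (λ(1−σ⁴)e^{−λσ²} + 2σ²(e^λ − e^{−λσ²}))/(1+σ²)², c = (σ⁴e^λ + (1 + 2σ² + λσ² + λσ⁴)e^{−λσ²})/(1+σ²)², satisfies e^{λu} ≤ φ(u) for all u ≤ 1. -/

import Mathlib

open Real

private lemma aux1 (t : ℝ) : 0 ≤ (t - 1) * Real.exp t + 1 := by
  have h := Real.add_one_le_exp (-t)
  have h2 : Real.exp (-t) * Real.exp t = 1 := by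
    rw [← Real.exp_add]; simp
  nlinarith [Real.exp_pos t]

private lemma k_mono : Monotone (fun t : ℝ => (t - 2) * Real.exp t + t + 2) := by
  have hd : ∀ t : ℝ, HasDerivAt (fun t : ℝ => (t - 2) * Real.exp t + t + 2)
      ((t - 1) * Real.exp t + 1) t := by
    intro t
    have h1 : HasDerivAt (fun t : ℝ => (t - 2) * Real.exp t)
        (1 * Real.exp t + (t - 2) * Real.exp t) t :=
      ((hasDerivAt_id t).sub_const 2).mul (Real.hasDerivAt_exp t)
    have h2 := (h1.add (hasDerivAt_id t)).add_const 2
    exact h2.congr_deriv (by ring)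
  apply monotone_of_deriv_nonneg
  · exact fun t => (hd t).differentiableAt
  · intro t
    rw [(hd t).deriv]
    exact aux1 t

private lemma k_nonneg (t : ℝ) (ht : 0 ≤ t) : 0 ≤ (t - 2) * Real.exp t + t + 2 := by
  have := k_mono ht
  simpa using this

private lemma m_mono : Monotone (fun t : ℝ => Real.exp t - 1 - t - t^2/2) := by
  have hd : ∀ t : ℝ, HasDerivAt (fun t : ℝ => Real.exp t - 1 - t - t^2/2)
      (Real.exp t - 1 - t) t := by
    intro t
    have h1 : HasDerivAt (fun t : ℝ => t^2/2) t t := by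
      have := (hasDerivAt_pow 2 t).div_const 2
      exact this.congr_deriv (by push_cast; ring)
    have h2 := (((Real.hasDerivAt_exp t).sub_const 1).sub (hasDerivAt_id t)).sub h1
    exact h2
  apply monotone_of_deriv_nonneg
  · exact fun t => (hd t).differentiableAt
  · intro t
    rw [(hd t).deriv]
    have := Real.add_one_le_exp t
    linarith

private lemma exp_quad_lower (t : ℝ) (ht : 0 ≤ t) : 1 + t + t^2/2 ≤ Real.exp t := by
  have := m_mono ht
  simp only at this
  norm_num at this
  linarith

private lemma exp_quad_upper (t : ℝ) (ht : t ≤ 0) : Real.exp t ≤ 1 + t + t^2/2 := by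
  have := m_mono ht
  simp only at this
  norm_num at this
  linarith

private lemma G_mono {s T : ℝ} (hs : 0 < s) (hsT : s ≤ T) :
    T^2 * (Real.exp s - 1 - s) ≤ s^2 * (Real.exp T - 1 - T) := by
  have hT : 0 < T := lt_of_lt_of_le hs hsT
  set G : ℝ → ℝ := fun t => (Real.exp t - 1 - t) / t^2 with hG
  have hd : ∀ t ∈ Set.Ioi (0:ℝ), HasDerivAt G
      (((Real.exp t - 1) * t^2 - (Real.exp t - 1 - t) * (2 * t)) / (t^2)^2) t := by
    intro t ht
    have ht0 : (t:ℝ) ≠ 0 := ne_of_gt ht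
    have h1 : HasDerivAt (fun t : ℝ => Real.exp t - 1 - t) (Real.exp t - 1) t := by
      have := ((Real.hasDerivAt_exp t).sub_const 1).sub (hasDerivAt_id t)
      exact this
    have h2 : HasDerivAt (fun t : ℝ => t^2) (2 * t) t := by
      have := hasDerivAt_pow 2 t
      simpa using this
    exact h1.div h2 (pow_ne_zero 2 ht0)
  have hmono : MonotoneOn G (Set.Ioi (0:ℝ)) := by
    apply monotoneOn_of_deriv_nonneg (convex_Ioi 0)
    · intro t ht
      exact ((hd t ht).differentiableAt).continuousAt.continuousWithinAt
    · rw [interior_Ioi]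
      intro t ht
      exact ((hd t ht).differentiableAt).differentiableWithinAt
    · rw [interior_Ioi]
      intro t ht
      rw [(hd t ht).deriv]
      have htpos : (0:ℝ) < t := ht
      have hnum : 0 ≤ (Real.exp t - 1) * t^2 - (Real.exp t - 1 - t) * (2 * t) := by
        have hk := k_nonneg t htpos.le
        nlinarith
      positivity
  have h := hmono (Set.mem_Ioi.mpr hs) (Set.mem_Ioi.mpr hT) hsT
  rw [hG] at h
  simp only at h
  rw [div_le_div_iff₀ (by positivity) (by positivity)] at h
  nlinarith

private lemma key (T t : ℝ) (hT : 0 < T) (ht : t ≤ T) :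
    Real.exp t ≤ 1 + t + (t^2 / T^2) * (Real.exp T - 1 - T) := by
  have hT2 : (0:ℝ) < T^2 := by positivity
  rcases le_or_gt t 0 with h | h
  · have h1 := exp_quad_upper t h
    have h2 := exp_quad_lower T hT.le
    have h3 : t^2/2 ≤ (t^2 / T^2) * (Real.exp T - 1 - T) := by
      have h4 : (t^2 / T^2) * (T^2/2) = t^2/2 := by field_simp
      rw [← h4]
      apply mul_le_mul_of_nonneg_left (by linarith) (by positivity)
    linarith
  · have hg := G_mono h ht
    have h3 : Real.exp t - 1 - t ≤ (t^2 / T^2) * (Real.exp T - 1 - T) := by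
      rw [div_mul_eq_mul_div, le_div_iff₀ hT2]
      nlinarith
    linarith

theorem quadratic_dominates_exp (σ : ℝ) (hσ : 0 ≤ σ) (lam : ℝ) (hlam : 0 < lam) :
    ∀ u ≤ (1:ℝ),
      Real.exp (lam * u) ≤
        ((Real.exp lam - Real.exp (-(lam * σ^2)) - lam * (1+σ^2) * Real.exp (-(lam * σ^2)))
          / (1+σ^2)^2) * u^2
        + ((lam * (1-σ^4) * Real.exp (-(lam * σ^2))
            + 2*σ^2*(Real.exp lam - Real.exp (-(lam * σ^2)))) / (1+σ^2)^2) * u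
        + ((σ^4 * Real.exp lam + (1 + 2*σ^2 + lam*σ^2 + lam*σ^4) * Real.exp (-(lam * σ^2)))
            / (1+σ^2)^2) := by
  intro u hu
  set E := Real.exp (-(lam * σ^2)) with hE
  have hEpos : 0 < E := Real.exp_pos _
  set t := lam * (u + σ^2) with htdef
  set T := lam * (1 + σ^2) with hTdef
  have hσ2 : (0:ℝ) < 1 + σ^2 := by positivity
  have hT : 0 < T := by positivity
  have ht : t ≤ T := by
    apply mul_le_mul_of_nonneg_left (by linarith) hlam.le
  have hkey := key T t hT ht
  have hexp_t : Real.exp t * E = Real.exp (lam * u) := by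
    rw [hE, ← Real.exp_add, htdef]; ring_nf
  have hexp_T : Real.exp T * E = Real.exp lam := by
    rw [hE, ← Real.exp_add, hTdef]; ring_nf
  have hmul : Real.exp t * E ≤ (1 + t + (t^2 / T^2) * (Real.exp T - 1 - T)) * E :=
    mul_le_mul_of_nonneg_right hkey hEpos.le
  have hrhs : (1 + t + (t^2 / T^2) * (Real.exp T - 1 - T)) * E
      = ((Real.exp lam - E - T * E) / (1+σ^2)^2) * u^2
        + ((lam * (1-σ^4) * E + 2*σ^2*(Real.exp lam - E)) / (1+σ^2)^2) * u
        + ((σ^4 * Real.exp lam + (1 + 2*σ^2 + lam*σ^2 + lam*σ^4) * E) / (1+σ^2)^2) := by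
    rw [← hexp_T, htdef, hTdef]
    have hlam0 : lam ≠ 0 := ne_of_gt hlam
    have hσ0 : (1:ℝ) + σ^2 ≠ 0 := ne_of_gt hσ2
    field_simp
    ring
  rw [hexp_t, hrhs] at hmul
  exact hmul
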